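/- For all integers k, j ≥ 0 one has K₋ₖ ∘ W ∘ K₋ⱼ = K₋ₖ₋ⱼ. -/

import Mathlib

open Complex MeasureTheory Metric Set Function

section aux
variable {E : Type*} [NormedAddCommGroup E] [NormedSpace ℂ E] [CompleteSpace E]

omit [CompleteSpace E] in
lemma aux_interval_swap (F : ℝ → ℝ → E) (hF : Continuous (uncurry F)) :
    (∫ θ in (0:ℝ)..(2*Real.pi), ∫ φ in (0:ℝ)..(2*Real.pi), F θ φ)
      = ∫ φ in (0:ℝ)..(2*Real.pi), ∫ θ in (0:ℝ)..(2*Real.pi), F θ φ := by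
  have hT : (0:ℝ) ≤ 2*Real.pi := by positivity
  simp only [intervalIntegral.integral_of_le hT]
  rw [MeasureTheory.integral_integral_swap]
  rw [Measure.prod_restrict]
  exact ((hF.continuousOn.integrableOn_compact (isCompact_Icc.prod isCompact_Icc)).mono_set
    (Set.prod_mono Ioc_subset_Icc_self Ioc_subset_Icc_self))

omit [CompleteSpace E] in
lemma aux_circle_swap (f : ℂ → ℂ → E) (r₁ r₂ : ℝ)
    (hf : Continuous fun p : ℝ × ℝ => f (circleMap 0 r₁ p.1) (circleMap 0 r₂ p.2)) :
    (∮ u in C(0, r₁), ∮ v in C(0, r₂), f u v)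
      = ∮ v in C(0, r₂), ∮ u in C(0, r₁), f u v := by
  have hd : ∀ R : ℝ, Continuous (fun θ : ℝ => deriv (circleMap (0:ℂ) R) θ) := by
    intro R
    simp only [deriv_circleMap]
    exact (continuous_circleMap 0 R).mul continuous_const
  simp only [circleIntegral, ← intervalIntegral.integral_smul]
  rw [aux_interval_swap (fun θ φ => deriv (circleMap 0 r₁) θ •
      deriv (circleMap 0 r₂) φ • f (circleMap 0 r₁ θ) (circleMap 0 r₂ φ))
    (((hd r₁).comp continuous_fst).smul (((hd r₂).comp continuous_snd).smul hf))]
  congr 1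
  ext φ
  congr 1
  ext θ
  rw [smul_comm]

lemma aux_clm_circleIntegral {F' : Type*} [NormedAddCommGroup F'] [NormedSpace ℂ F']
    [CompleteSpace F'] (L : E →L[ℂ] F') (f : ℂ → E) (c : ℂ) (R : ℝ)
    (hf : CircleIntegrable f c R) :
    L (∮ z in C(c, R), f z) = ∮ z in C(c, R), L (f z) := by
  have hT : (0:ℝ) ≤ 2*Real.pi := by positivity
  simp only [circleIntegral]
  rw [intervalIntegral.integral_of_le hT, intervalIntegral.integral_of_le hT,
    ← L.integral_comp_comm hf.out.1]
  simp only [ContinuousLinearMap.map_smul]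
end aux

/-- The `j`-th Laurent coefficient `K_j = (2πi)⁻¹ ∮_{|v|=r} v^(-j) R(v) dv` of the
resolvent function `R`. -/
noncomputable def laurentK {H : Type*} [NormedAddCommGroup H] [NormedSpace ℂ H]
    (R : ℂ → (H →L[ℂ] H)) (r : ℝ) (j : ℤ) : H →L[ℂ] H :=
  (2 * (Real.pi : ℂ) * Complex.I)⁻¹ • ∮ v in C(0, r), v ^ (-j) • R v

/-- For all integers `k, j ≥ 0` one has `K₋ₖ ∘ W ∘ K₋ⱼ = K₋ₖ₋ⱼ`. -/
theorem laurentK_neg_comp_perturbation_comp_laurentK_neg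
    {H : Type*} [NormedAddCommGroup H] [InnerProductSpace ℂ H] [CompleteSpace H]
    (N₀ W : H →L[ℂ] H) (z₀ : ℂ) (r : ℝ) (hr : 0 < r)
    (R : ℂ → (H →L[ℂ] H))
    (hR : ∀ v : ℂ, v ≠ 0 → ‖v‖ ≤ r →
      (N₀ + v • W - z₀ • (1 : H →L[ℂ] H)) * R v = 1 ∧
      R v * (N₀ + v • W - z₀ • (1 : H →L[ℂ] H)) = 1)
    (k j : ℤ) (hk : 0 ≤ k) (hj : 0 ≤ j) :
    laurentK R r (-k) * W * laurentK R r (-j) = laurentK R r (-k - j) := by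
  obtain ⟨κ, rfl⟩ := Int.eq_ofNat_of_zero_le hk
  obtain ⟨ι, rfl⟩ := Int.eq_ofNat_of_zero_le hj
  set A : ℂ → (H →L[ℂ] H) := fun v => N₀ + v • W - z₀ • 1 with hA
  set F : ℂ → (H →L[ℂ] H) := fun v => Ring.inverse (A v) with hF
  set ρ : ℝ := r / 2 with hρdef
  have hρ : 0 < ρ := by positivity
  have hρr : ρ ≤ r := by rw [hρdef]; linarith
  have hρltr : ρ < r := by rw [hρdef]; linarith
  -- basic facts about F
  have hAdiff : Differentiable ℂ A :=
    ((differentiable_const N₀).add (differentiable_id.smul_const W)).sub (differentiable_const _)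
  have hFR : ∀ v, v ≠ 0 → ‖v‖ ≤ r → F v = R v := by
    intro v h1 h2
    exact Ring.inverse_unit ⟨A v, R v, (hR v h1 h2).1, (hR v h1 h2).2⟩
  have hunit : ∀ v, v ≠ 0 → ‖v‖ ≤ r → IsUnit (A v) := fun v h1 h2 =>
    ⟨⟨A v, R v, (hR v h1 h2).1, (hR v h1 h2).2⟩, rfl⟩
  have hFd : ∀ v, v ≠ 0 → ‖v‖ ≤ r → DifferentiableAt ℂ F v := fun v h1 h2 =>
    (hAdiff v).inverse (hunit v h1 h2)
  have hFc : ∀ v, v ≠ 0 → ‖v‖ ≤ r → ContinuousAt F v := fun v h1 h2 =>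
    (hFd v h1 h2).continuousAt
  -- resolvent identity
  have hkey : ∀ u v : ℂ, u ≠ 0 → ‖u‖ ≤ r → v ≠ 0 → ‖v‖ ≤ r → u ≠ v →
      F u * W * F v = (u - v)⁻¹ • (F v - F u) := by
    intro u v hu1 hu2 hv1 hv2 huv
    have hu := hR u hu1 hu2
    have hv := hR v hv1 hv2
    rw [hFR u hu1 hu2, hFR v hv1 hv2]
    have hsub : u - v ≠ 0 := sub_ne_zero.2 huv
    rw [eq_inv_smul_iff₀ hsub]
    have hAuv : A u - A v = (u - v) • W := by
      simp only [hA, sub_smul]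
      abel
    calc (u - v) • (R u * W * R v) = R u * ((u - v) • W) * R v := by
          rw [mul_smul_comm, smul_mul_assoc]
      _ = R u * (A u - A v) * R v := by rw [hAuv]
      _ = R u * A u * R v - R u * (A v * R v) := by
          rw [mul_sub, sub_mul, mul_assoc (R u) (A v)]
      _ = R v - R u := by rw [hu.2, hv.1, one_mul, mul_one]
  -- membership helpers
  have hsphere : ∀ ss : ℝ, 0 < ss → ss ≤ r → ∀ v ∈ sphere (0:ℂ) ss, v ≠ 0 ∧ ‖v‖ ≤ r := by
    intro ss h1 h2 v hv
    rw [mem_sphere_zero_iff_norm] at hv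
    have hne : ‖v‖ ≠ 0 := by rw [hv]; exact h1.ne'
    exact ⟨norm_ne_zero_iff.1 hne, by rw [hv]; exact h2⟩
  have hFon : ∀ ss : ℝ, 0 < ss → ss ≤ r → ContinuousOn F (sphere (0:ℂ) ss) := by
    intro ss h1 h2 v hv
    exact (hFc v (hsphere ss h1 h2 v hv).1 (hsphere ss h1 h2 v hv).2).continuousWithinAt
  have hFcm : ∀ ss : ℝ, 0 < ss → ss ≤ r → Continuous fun θ : ℝ => F (circleMap 0 ss θ) := by
    intro ss h1 h2
    rw [continuous_iff_continuousAt]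
    intro θ
    have hnorm : ‖circleMap 0 ss θ‖ ≤ r := by
      rw [norm_circleMap_zero, abs_of_pos h1]; exact h2
    exact (hFc _ (circleMap_ne_center h1.ne') hnorm).comp (continuous_circleMap 0 ss).continuousAt
  -- integrability of the basic integrands
  have hgcont : ∀ (m : ℕ) (ss : ℝ), 0 < ss → ss ≤ r →
      ContinuousOn (fun v : ℂ => v ^ m • F v) (sphere (0:ℂ) ss) := fun m ss h1 h2 =>
    ((continuous_pow m).continuousOn).smul (hFon ss h1 h2)
  have hgint : ∀ (m : ℕ) (ss : ℝ), 0 < ss → ss ≤ r →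
      CircleIntegrable (fun v : ℂ => v ^ m • F v) 0 ss := fun m ss h1 h2 =>
    (hgcont m ss h1 h2).circleIntegrable h1.le
  -- radius independence
  have hshift : ∀ m : ℕ, (∮ v in C(0, r), v ^ m • F v) = ∮ v in C(0, ρ), v ^ m • F v := by
    intro m
    refine circleIntegral_eq_of_differentiable_on_annulus_off_countable hρ hρr countable_empty
      ?_ ?_
    · intro v hv
      rw [mem_diff, mem_closedBall_zero_iff, mem_ball_zero_iff, not_lt] at hv
      have hv0 : v ≠ 0 := by
        intro h
        rw [h, norm_zero] at hv
        linarith [hv.2]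
      exact ((continuous_pow m).continuousAt.smul (hFc v hv0 hv.1)).continuousWithinAt
    · intro z hz
      rw [mem_diff, mem_diff, mem_ball_zero_iff, mem_closedBall_zero_iff, not_le] at hz
      have hz0 : z ≠ 0 := by
        intro h
        rw [h, norm_zero] at hz
        linarith [hz.1.2]
      exact (differentiableAt_pow m).smul (hFd z hz0 hz.1.1.le)
  -- laurentK in terms of F
  have hlaur : ∀ m : ℕ, laurentK R r (-(m:ℤ)) =
      (2 * (Real.pi : ℂ) * Complex.I)⁻¹ • ∮ v in C(0, r), v ^ m • F v := by
    intro m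
    rw [laurentK]
    congr 1
    refine circleIntegral.integral_congr hr.le fun v hv => ?_
    obtain ⟨h1, h2⟩ := hsphere r hr le_rfl v hv
    show v ^ (-(-(m:ℤ))) • R v = v ^ m • F v
    rw [neg_neg, zpow_natCast, hFR v h1 h2]
  -- abbreviations
  set X := ∮ u in C(0, r), u ^ κ • F u with hXdef
  set Y := ∮ v in C(0, ρ), v ^ ι • F v with hYdef
  set Z := ∮ v in C(0, ρ), v ^ (κ + ι) • F v with hZdef
  set c : ℂ := (2 * (Real.pi : ℂ) * Complex.I)⁻¹ with hcdef
  have h2pi : (2 * (Real.pi : ℂ) * Complex.I) ≠ 0 := by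
    simp [Real.pi_ne_zero, Complex.I_ne_zero]
  set P : ℂ → ℂ → (H →L[ℂ] H) := fun u v => (u ^ κ * v ^ ι * (u - v)⁻¹) • F v with hPdef
  set Q : ℂ → ℂ → (H →L[ℂ] H) := fun u v => (u ^ κ * v ^ ι * (u - v)⁻¹) • F u with hQdef
  have huv : ∀ u ∈ sphere (0:ℂ) r, ∀ v ∈ sphere (0:ℂ) ρ, u - v ≠ 0 := by
    intro u hu v hv h
    rw [mem_sphere_zero_iff_norm] at hu hv
    rw [sub_eq_zero] at h
    rw [h, hv] at hu
    exact hρltr.ne hu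
  have huv' : ∀ u : ℂ, ‖u‖ = r → ∀ v ∈ closedBall (0:ℂ) ρ, u - v ≠ 0 := by
    intro u hu v hv h
    rw [mem_closedBall_zero_iff] at hv
    rw [sub_eq_zero] at h
    rw [h] at hu
    rw [hu] at hv
    linarith
  -- pull multiplications through the integrals
  have step1 : X * W * Y = ∮ u in C(0, r), ((u ^ κ • F u) * W * Y) := by
    have h := aux_clm_circleIntegral ((ContinuousLinearMap.mul ℂ (H →L[ℂ] H)).flip (W * Y))
      (fun u => u ^ κ • F u) 0 r (hgint κ r hr le_rfl)
    simp only [ContinuousLinearMap.flip_apply, ContinuousLinearMap.mul_apply'] at h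
    rw [← hXdef] at h
    rw [mul_assoc, h]
    simp only [mul_assoc]
  have step2 : ∀ u ∈ sphere (0:ℂ) r, (u ^ κ • F u) * W * Y
      = ∮ v in C(0, ρ), ((u ^ κ • F u) * W * (v ^ ι • F v)) := by
    intro u _
    have h := aux_clm_circleIntegral (ContinuousLinearMap.mul ℂ (H →L[ℂ] H) ((u ^ κ • F u) * W))
      (fun v => v ^ ι • F v) 0 ρ (hgint ι ρ hρ hρr)
    simp only [ContinuousLinearMap.mul_apply'] at h
    rw [← hYdef] at h
    rw [h]
  -- pointwise expansion of the integrand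
  have step3 : ∀ u ∈ sphere (0:ℂ) r, ∀ v ∈ sphere (0:ℂ) ρ,
      (u ^ κ • F u) * W * (v ^ ι • F v) = P u v - Q u v := by
    intro u hu v hv
    obtain ⟨hu0, hur⟩ := hsphere r hr le_rfl u hu
    obtain ⟨hv0, hvr⟩ := hsphere ρ hρ hρr v hv
    have hne : u ≠ v := fun h => huv u hu v hv (by rw [h, sub_self])
    rw [smul_mul_assoc, smul_mul_assoc, mul_smul_comm, hkey u v hu0 hur hv0 hvr hne,
      smul_smul, smul_smul, smul_sub]
  -- integrability of P and Q
  have hPint : ∀ u ∈ sphere (0:ℂ) r, CircleIntegrable (fun v => P u v) 0 ρ := by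
    intro u hu
    refine ContinuousOn.circleIntegrable hρ.le ?_
    simp only [hPdef]
    refine ContinuousOn.fun_smul ?_ (hFon ρ hρ hρr)
    exact (continuousOn_const.mul (continuous_pow ι).continuousOn).mul
      (((continuous_const.sub continuous_id).continuousOn).inv₀ fun v hv => huv u hu v hv)
  have hQint : ∀ u ∈ sphere (0:ℂ) r, CircleIntegrable (fun v => Q u v) 0 ρ := by
    intro u hu
    refine ContinuousOn.circleIntegrable hρ.le ?_
    simp only [hQdef]
    refine ContinuousOn.fun_smul ?_ continuousOn_const
    exact (continuousOn_const.mul (continuous_pow ι).continuousOn).mul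
      (((continuous_const.sub continuous_id).continuousOn).inv₀ fun v hv => huv u hu v hv)
  -- the Q integral vanishes
  have hQzero : ∀ u ∈ sphere (0:ℂ) r, (∮ v in C(0, ρ), Q u v) = 0 := by
    intro u hu
    have hu' := mem_sphere_zero_iff_norm.1 hu
    have h1 : (∮ v in C(0, ρ), Q u v)
        = (∮ v in C(0, ρ), (u ^ κ * v ^ ι * (u - v)⁻¹)) • F u := by
      simp only [hQdef]
      exact circleIntegral.integral_smul_const _ _ _ _
    have h2 : (∮ v in C(0, ρ), (u ^ κ * v ^ ι * (u - v)⁻¹)) = 0 := by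
      refine circleIntegral_eq_zero_of_differentiable_on_off_countable hρ.le countable_empty
        ?_ ?_
      · exact (continuousOn_const.mul (continuous_pow ι).continuousOn).mul
          (((continuous_const.sub continuous_id).continuousOn).inv₀ fun v hv => huv' u hu' v hv)
      · intro z hz
        exact ((differentiableAt_const _).mul (differentiableAt_pow ι)).mul
          (((differentiableAt_const u).sub differentiableAt_id).inv
            (huv' u hu' z (ball_subset_closedBall hz.1)))
    rw [h1, h2, zero_smul]
  have step4 : ∀ u ∈ sphere (0:ℂ) r,
      (∮ v in C(0, ρ), ((u ^ κ • F u) * W * (v ^ ι • F v))) = ∮ v in C(0, ρ), P u v := by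
    intro u hu
    rw [circleIntegral.integral_congr hρ.le (fun v hv => step3 u hu v hv),
      circleIntegral.integral_sub (hPint u hu) (hQint u hu), hQzero u hu, sub_zero]
  have step5 : X * W * Y = ∮ u in C(0, r), ∮ v in C(0, ρ), P u v := by
    rw [step1]
    exact circleIntegral.integral_congr hr.le fun u hu => by rw [step2 u hu, step4 u hu]
  -- Fubini
  have step6 : (∮ u in C(0, r), ∮ v in C(0, ρ), P u v)
      = ∮ v in C(0, ρ), ∮ u in C(0, r), P u v := by
    refine aux_circle_swap P r ρ ?_
    simp only [hPdef]
    have h1 : Continuous fun p : ℝ × ℝ => circleMap 0 r p.1 :=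
      (continuous_circleMap 0 r).comp continuous_fst
    have h2 : Continuous fun p : ℝ × ℝ => circleMap 0 ρ p.2 :=
      (continuous_circleMap 0 ρ).comp continuous_snd
    have hne : ∀ p : ℝ × ℝ, circleMap 0 r p.1 - circleMap 0 ρ p.2 ≠ 0 := fun p =>
      huv _ (circleMap_mem_sphere 0 hr.le p.1) _ (circleMap_mem_sphere 0 hρ.le p.2)
    exact (((h1.pow κ).mul (h2.pow ι)).mul ((h1.sub h2).inv₀ hne)).smul
      ((hFcm ρ hρ hρr).comp continuous_snd)
  -- Cauchy integral formula
  have step7 : ∀ v ∈ sphere (0:ℂ) ρ,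
      (∮ u in C(0, r), P u v) = (2 * (Real.pi:ℂ) * Complex.I) • (v ^ (κ + ι) • F v) := by
    intro v hv
    have hvball : v ∈ ball (0:ℂ) r := by
      rw [mem_ball_zero_iff, mem_sphere_zero_iff_norm.1 hv]
      exact hρltr
    have h1 : (∮ u in C(0, r), P u v)
        = ∮ u in C(0, r), (u - v)⁻¹ • (u ^ κ • (v ^ ι • F v)) := by
      refine circleIntegral.integral_congr hr.le fun u _ => ?_
      simp only [hPdef]
      rw [smul_smul, smul_smul]
      congr 1
      ring
    rw [h1, circleIntegral_sub_inv_smul_of_differentiable_on_off_countable countable_empty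
      hvball (((continuous_pow κ).fun_smul continuous_const).continuousOn)
      (fun x _ => (differentiableAt_pow κ).smul_const _)]
    congr 1
    rw [smul_smul, ← pow_add]
  have step8 : (∮ v in C(0, ρ), ∮ u in C(0, r), P u v)
      = (2 * (Real.pi:ℂ) * Complex.I) • Z := by
    rw [circleIntegral.integral_congr hρ.le fun v hv => step7 v hv,
      circleIntegral.integral_smul, ← hZdef]
  -- put everything together
  have hexp : -(κ:ℤ) - (ι:ℤ) = -(((κ + ι : ℕ)):ℤ) := by push_cast; ring
  rw [hexp, hlaur κ, hlaur ι, hlaur (κ + ι), hshift ι, hshift (κ + ι),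
    smul_mul_assoc, smul_mul_assoc, mul_smul_comm, smul_smul, step5, step6, step8, smul_smul]
  congr 1
  rw [hcdef, mul_assoc, inv_mul_cancel₀ h2pi, mul_one]
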